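/- Let w ≥ 1, let α be a linear order, and let g : Fin (w+1) → α be injective. Let A be the unique index in {0, …, w−1} at which g attains its minimum over {0, …, w−1}, and let B be the unique index in {1, …, w} at which g attains its minimum over {1, …, w}. Then A ≠ B if and only if the global minimum of g over all of Fin (w+1) is attained at index 0 or at index w. -/

import Mathlib

/-- **When do two consecutive windows pick different minimizers?**
Let `g : Fin (w+1) → α` be injective into a linear order, `A` the unique index minimizing `g`
over the window `{0, …, w-1}` and `B` the unique index minimizing `g` over the window
`{1, …, w}`. Then `A ≠ B` iff the global minimum of `g` is attained at index `0` or index `w`. -/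
theorem consecutive_window_minimizers_differ_iff (w : ℕ) (hw : 1 ≤ w)
    {α : Type*} [LinearOrder α] (g : Fin (w + 1) → α) (hg : Function.Injective g)
    (A B : Fin (w + 1))
    (hA : (A : ℕ) < w ∧ ∀ x : Fin (w + 1), (x : ℕ) < w → g A ≤ g x)
    (hB : 1 ≤ (B : ℕ) ∧ ∀ x : Fin (w + 1), 1 ≤ (x : ℕ) → g B ≤ g x) :
    A ≠ B ↔ ((∀ x, g 0 ≤ g x) ∨ (∀ x, g (Fin.last w) ≤ g x)) := by
  obtain ⟨hAw, hAmin⟩ := hA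
  obtain ⟨hB1, hBmin⟩ := hB
  have hlast : ∀ x : Fin (w + 1), ¬ (x : ℕ) < w → x = Fin.last w := by
    intro x hx
    have := x.isLt
    exact Fin.ext (by simp [Fin.val_last]; omega)
  have hzero : ∀ x : Fin (w + 1), ¬ 1 ≤ (x : ℕ) → x = 0 := by
    intro x hx
    exact Fin.ext (by show (x : ℕ) = 0; omega)
  have hlastval : ((Fin.last w : Fin (w+1)) : ℕ) = w := Fin.val_last w
  have h0val : ((0 : Fin (w+1)) : ℕ) = 0 := rfl
  constructor
  · intro hne
    by_cases hA0 : A = 0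
    · by_cases hBw : (B : ℕ) < w
      · -- A = 0, B in first window: g A ≤ g B
        left
        intro x
        by_cases hx : (x : ℕ) < w
        · exact hA0 ▸ hAmin x hx
        · have hxl := hlast x hx
          have h1 : g A ≤ g B := hAmin B hBw
          have h2 : g B ≤ g x := hBmin x (by rw [hxl, hlastval]; omega)
          calc g 0 = g A := by rw [hA0]
            _ ≤ g B := h1
            _ ≤ g x := h2
      · have hBl := hlast B hBw
        rcases le_total (g 0) (g (Fin.last w)) with h | h
        · left
          intro x
          by_cases hx : (x : ℕ) < w
          · exact hA0 ▸ hAmin x hx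
          · rw [hlast x hx]; exact h
        · right
          intro x
          by_cases hx : 1 ≤ (x : ℕ)
          · exact hBl ▸ hBmin x hx
          · rw [hzero x hx]; exact h
    · -- A ≠ 0, so A.val ≥ 1
      have hA1 : 1 ≤ (A : ℕ) := by
        rcases Nat.eq_zero_or_pos (A : ℕ) with h | h
        · exact absurd (Fin.ext (by simp [h])) hA0
        · exact h
      by_cases hBw : (B : ℕ) < w
      · -- both in both windows: contradiction
        have h1 : g A ≤ g B := hAmin B hBw
        have h2 : g B ≤ g A := hBmin A hA1
        exact absurd (hg (le_antisymm h1 h2)) hne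
      · have hBl := hlast B hBw
        right
        intro x
        by_cases hx : 1 ≤ (x : ℕ)
        · exact hBl ▸ hBmin x hx
        · rw [hzero x hx]
          have h1 : g A ≤ g 0 := hAmin 0 (by rw [h0val]; omega)
          have h2 : g B ≤ g A := hBmin A hA1
          rw [← hBl]
          exact le_trans h2 h1
  · rintro (h | h)
    · have hA0 : A = 0 := hg (le_antisymm (hAmin 0 (by rw [h0val]; omega)) (h A))
      intro hAB
      rw [hA0] at hAB
      rw [← hAB, h0val] at hB1
      omega
    · have hBl : B = Fin.last w :=
        hg (le_antisymm (hBmin (Fin.last w) (by rw [hlastval]; omega)) (h B))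
      intro hAB
      rw [hBl] at hAB
      rw [hAB, hlastval] at hAw
      omega
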